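/- For every tree T on m ≥ 3 vertices, there exist two subtrees U₁ and U₂ of T such that the union of their vertex sets is the vertex set of T, they share exactly one vertex, and each of U₁ and U₂ has at least m/3 vertices. -/

import Mathlib

open SimpleGraph



lemma greedy_split {α : Type*} [DecidableEq α] (s : Finset α) (w : α → ℕ) (m : ℕ)
    (h3 : 3 ≤ m) (hw1 : ∀ a ∈ s, 1 ≤ w a) (hw2 : ∀ a ∈ s, 3 * w a ≤ 2 * m)
    (hsum : ∑ a ∈ s, w a = m - 1) :
    ∃ t ⊆ s, m ≤ 3 * (∑ a ∈ t, w a + 1) ∧ m ≤ 3 * (∑ a ∈ s \ t, w a + 1) := by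
  by_cases hbig : ∃ a ∈ s, m ≤ 3 * (w a + 1)
  · obtain ⟨a, ha, hwa⟩ := hbig
    refine ⟨{a}, Finset.singleton_subset_iff.mpr ha, by simpa using hwa, ?_⟩
    have hsd : ∑ x ∈ s \ {a}, w x + ∑ x ∈ {a}, w x = ∑ x ∈ s, w x :=
      Finset.sum_sdiff (Finset.singleton_subset_iff.mpr ha)
    simp only [Finset.sum_singleton] at hsd
    have := hw2 a ha
    omega
  · push_neg at hbig
    have hP : (∅ : Finset α) ∈ s.powerset.filter (fun t => 3 * ∑ a ∈ t, w a ≤ 2 * m) := by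
      simp
    obtain ⟨t, htP, hmax⟩ := Finset.exists_max_image _ (fun t => ∑ a ∈ t, w a) ⟨∅, hP⟩
    rw [Finset.mem_filter, Finset.mem_powerset] at htP
    obtain ⟨hts, htle⟩ := htP
    have hBle : ∑ a ∈ t, w a ≤ m - 1 := hsum ▸ Finset.sum_le_sum_of_subset hts
    have hsd : ∑ x ∈ s \ t, w x + ∑ x ∈ t, w x = ∑ x ∈ s, w x := Finset.sum_sdiff hts
    refine ⟨t, hts, ?_, by omega⟩
    by_contra hlt
    push_neg at hlt
    have htne : t ≠ s := by
      rintro rfl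
      omega
    obtain ⟨a, has, hat⟩ : ∃ a ∈ s, a ∉ t := by
      by_contra hall
      push_neg at hall
      exact htne (Finset.Subset.antisymm hts hall)
    have hwa := hbig a has
    have hins : insert a t ∈ s.powerset.filter (fun t => 3 * ∑ a ∈ t, w a ≤ 2 * m) := by
      rw [Finset.mem_filter, Finset.mem_powerset]
      constructor
      · exact Finset.insert_subset has hts
      · rw [Finset.sum_insert hat]
        omega
    have := hmax _ hins
    rw [Finset.sum_insert hat] at this
    have := hw1 a has
    omega


namespace TreeSplitAux

variable {V : Type*} (T : SimpleGraph V)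


variable {V : Type*} (T : SimpleGraph V)

abbrev Gm (v : V) : SimpleGraph {w : V // w ≠ v} := T.induce {w : V | w ≠ v}

lemma gm_adj {v : V} {a b : {w : V // w ≠ v}} : (Gm T v).Adj a b ↔ T.Adj a.1 b.1 := by
  simp [Gm]

lemma support_comp {v u : V} (p : T.Walk u v) (hp : p.IsPath) :
    ∀ w ∈ p.support, w ≠ v → ∃ (hw : w ≠ v) (hu : u ≠ v),
      (Gm T v).connectedComponentMk ⟨w, hw⟩ = (Gm T v).connectedComponentMk ⟨u, hu⟩ := by
  induction p with
  | nil => intro w hw hwv; simp at hw; exact absurd hw hwv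
  | @cons u b v h q ih =>
    intro w hw hwv
    have hq := hp.of_cons
    have huv : u ≠ v := by
      rintro rfl
      exact (Walk.cons_isPath_iff h q).mp hp |>.2 q.end_mem_support
    rcases List.mem_cons.mp (by simpa using hw) with rfl | hw'
    · exact ⟨hwv, huv, rfl⟩
    · by_cases hbv : b = v
      · subst hbv
        have : q = Walk.nil := (Walk.isPath_iff_eq_nil (p := q)).mp hq
        subst this
        simp at hw'
        exact absurd hw' hwv
      · obtain ⟨hw2, hb2, hcomp⟩ := ih hq w hw' hwv
        refine ⟨hw2, huv, ?_⟩
        rw [hcomp]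
        exact ConnectedComponent.sound (Adj.reachable ((gm_adj T).mpr h)).symm

lemma reachable_induce {s : Set V} {a b : V} (p : T.Walk a b)
    (h : ∀ w ∈ p.support, w ∈ s) (ha : a ∈ s) (hb : b ∈ s) :
    (T.induce s).Reachable ⟨a, ha⟩ ⟨b, hb⟩ := by
  induction p with
  | nil => rfl
  | @cons a c b hadj q ih =>
    have hc : c ∈ s := h _ (by simp)
    have h1 : (T.induce s).Adj ⟨a, ha⟩ ⟨c, hc⟩ := by simpa using hadj
    exact h1.reachable.trans (ih (fun w hw => h w (by simp [hw])) hc hb)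

lemma exists_path_of_reachable_induce {s : Set V} {a b : s}
    (h : (T.induce s).Reachable a b) :
    ∃ p : T.Walk a.1 b.1, p.IsPath ∧ ∀ w ∈ p.support, w ∈ s := by
  classical
  obtain ⟨q⟩ := h
  let q' := q.toPath
  refine ⟨(q'.1.map (Embedding.induce s).toHom), Walk.map_isPath_of_injective
    Subtype.val_injective q'.2, ?_⟩
  intro w hw
  replace hw : w ∈ (q'.1.map (Embedding.induce s).toHom).support := hw
  rw [Walk.support_map, List.mem_map] at hw
  obtain ⟨x, _, rfl⟩ := hw
  exact x.2

/-- There is a neighbor of `v` in each component of `T - v`. -/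
lemma exists_adj_comp (hT : T.IsTree) {v u : V} (hu : u ≠ v) :
    ∃ (b : V) (hb : b ≠ v), T.Adj v b ∧
      (Gm T v).connectedComponentMk ⟨b, hb⟩ = (Gm T v).connectedComponentMk ⟨u, hu⟩ := by
  obtain ⟨q, hq, -⟩ := hT.existsUnique_path v u
  cases q with
  | nil => exact absurd rfl hu.symm
  | @cons _ b _ h q' =>
    have hq' := hq.of_cons
    have hbv : b ≠ v := by
      rintro rfl
      exact ((Walk.cons_isPath_iff h q').mp hq).2 q'.start_mem_support
    have hbmem : b ∈ (Walk.cons h q').reverse.support := by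
      rw [Walk.support_reverse, List.mem_reverse]
      simp
    obtain ⟨hb2, hu2, hc⟩ := support_comp T (Walk.cons h q').reverse hq.reverse b hbmem hbv
    exact ⟨b, hb2, h, hc⟩

/-- Separation: vertices of the component of `nb` in `T - v` (other than `nb`) are not
reachable from `v` in `T - nb`, where `nb` is a neighbor of `v`. -/
lemma not_reachable_sep (hT : T.IsTree) {v nb w : V} (hnb : nb ≠ v) (hadj : T.Adj v nb)
    (hw : w ≠ v) (hwnb : w ≠ nb)
    (hcomp : (Gm T v).connectedComponentMk ⟨w, hw⟩ = (Gm T v).connectedComponentMk ⟨nb, hnb⟩) :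
    ¬ (Gm T nb).Reachable ⟨v, hnb.symm⟩ ⟨w, hwnb⟩ := by
  intro hr
  obtain ⟨p1, hp1, hp1s⟩ := exists_path_of_reachable_induce T hr
  rw [ConnectedComponent.eq] at hcomp
  obtain ⟨p2, hp2, hp2s⟩ := exists_path_of_reachable_induce T hcomp
  have hp3 : (Walk.cons hadj p2.reverse).IsPath := by
    rw [Walk.cons_isPath_iff]
    refine ⟨hp2.reverse, ?_⟩
    rw [Walk.support_reverse, List.mem_reverse]
    exact fun hmem => (hp2s v hmem) rfl
  obtain ⟨p0, -, huniq⟩ := hT.existsUnique_path v w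
  have heq : p1 = Walk.cons hadj p2.reverse := (huniq _ hp1).trans (huniq _ hp3).symm
  have : nb ∈ p1.support := by
    rw [heq, Walk.support_cons]
    exact List.mem_cons_of_mem _ p2.reverse.start_mem_support
  exact (hp1s nb this) rfl


variable {V : Type*} (T : SimpleGraph V)
def Svc (v : V) (c : (Gm T v).ConnectedComponent) : Set V := Subtype.val '' c.supp

noncomputable instance instFintypeGmCC [Fintype V] (v : V) :
    Fintype ((Gm T v).ConnectedComponent) :=
  Fintype.ofFinite _

lemma mem_Svc {T : SimpleGraph V} {v : V} {c : (Gm T v).ConnectedComponent} {w : V} :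
    w ∈ Svc T v c ↔ ∃ hw : w ≠ v, (Gm T v).connectedComponentMk ⟨w, hw⟩ = c := by
  constructor
  · rintro ⟨⟨x, hx⟩, hx2, rfl⟩
    exact ⟨hx, hx2⟩
  · rintro ⟨hw, h⟩
    exact ⟨⟨w, hw⟩, h, rfl⟩

lemma Svc_ncard [Fintype V] {v : V} (c : (Gm T v).ConnectedComponent) :
    (Svc T v c).ncard = c.supp.ncard :=
  Set.ncard_image_of_injective _ Subtype.val_injective

lemma one_le_Svc_ncard [Fintype V] {v : V} (c : (Gm T v).ConnectedComponent) :
    1 ≤ (Svc T v c).ncard := by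
  obtain ⟨x, hx⟩ := c.exists_rep
  have : x.1 ∈ Svc T v c := ⟨x, hx, rfl⟩
  have hfin : (Svc T v c).Finite := Set.toFinite _
  have := Set.ncard_pos (s := Svc T v c) hfin |>.mpr ⟨_, this⟩
  omega

lemma sum_Svc_ncard [Fintype V] (v : V) :
    ∑ c : (Gm T v).ConnectedComponent, (Svc T v c).ncard = Fintype.card V - 1 := by
  classical
  have h1 : ∀ c : (Gm T v).ConnectedComponent, (Svc T v c).ncard =
      (Finset.univ.filter (fun x : {w : V // w ≠ v} =>
        (Gm T v).connectedComponentMk x = c)).card := by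
    intro c
    rw [Svc_ncard, Set.ncard_eq_toFinset_card']
    congr 1
    ext x
    simp [ConnectedComponent.mem_supp_iff]
  simp_rw [h1]
  have h2 : (Finset.univ : Finset {w : V // w ≠ v}).card =
      ∑ c : (Gm T v).ConnectedComponent, (Finset.univ.filter (fun x : {w : V // w ≠ v} =>
        (Gm T v).connectedComponentMk x = c)).card :=
    Finset.card_eq_sum_card_fiberwise (fun x _ => Finset.mem_univ _)
  refine h2.symm.trans ?_
  rw [Finset.card_univ]
  simp [Fintype.card_subtype_compl]


variable {V : Type*} (T : SimpleGraph V)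

/-- Given any set `S` of components of `T - v`, there is a connected subgraph whose
vertex set is `{v}` together with the supports of the components in `S`. -/
lemma exists_connected_subgraph (hT : T.IsTree) (v : V)
    (S : Set ((Gm T v).ConnectedComponent)) :
    ∃ U : T.Subgraph, U.Connected ∧ U.verts = insert v (⋃ c ∈ S, Svc T v c) := by
  classical
  -- a chosen path from `u` to `v`
  let pth : V → (u : V) → T.Walk u v := fun _ u => (hT.existsUnique_path u v).choose
  have hpth : ∀ u : V, (pth v u).IsPath := fun u => (hT.existsUnique_path u v).choose_spec.1
  let ι := {u : {w : V // w ≠ v} // (Gm T v).connectedComponentMk u ∈ S}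
  let U : T.Subgraph := T.singletonSubgraph v ⊔ ⨆ i : ι, (pth v i.1.1).toSubgraph
  have hle : ∀ i : ι, (pth v i.1.1).toSubgraph ≤ U :=
    fun i => le_trans (le_iSup (fun i : ι => (pth v i.1.1).toSubgraph) i) le_sup_right
  have hverts : U.verts = insert v (⋃ c ∈ S, Svc T v c) := by
    have : U.verts = {v} ∪ ⋃ i : ι, {w | w ∈ (pth v i.1.1).support} := by
      simp [U, Subgraph.verts_sup, Subgraph.verts_iSup, singletonSubgraph_verts,
        Walk.verts_toSubgraph]
    rw [this]
    apply Set.Subset.antisymm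
    · intro w hw0
      rcases hw0 with hw0 | hw
      · have hwv : w = v := hw0
        exact Set.mem_insert_iff.mpr (Or.inl hwv)
      · obtain ⟨i, hi⟩ := Set.mem_iUnion.mp hw
        by_cases hwv : w = v
        · exact Set.mem_insert_iff.mpr (Or.inl hwv)
        · obtain ⟨hw2, hu2, hcomp⟩ := support_comp T (pth v i.1.1) (hpth i.1.1) w hi hwv
          refine Set.mem_insert_of_mem _ (Set.mem_biUnion (show
            (Gm T v).connectedComponentMk i.1 ∈ S from i.2) ?_)
          exact mem_Svc.mpr ⟨hw2, by rw [hcomp]⟩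
    · rintro w hw
      rcases Set.mem_insert_iff.mp hw with rfl | hw
      · exact Or.inl rfl
      · obtain ⟨c, hcS, hwc⟩ := Set.mem_iUnion₂.mp hw
        obtain ⟨hwv, hcomp⟩ := mem_Svc.mp hwc
        refine Or.inr (Set.mem_iUnion.mpr ⟨⟨⟨w, hwv⟩, by rw [hcomp]; exact hcS⟩, ?_⟩)
        exact Walk.start_mem_support _
  have hvmem : v ∈ U.verts := by rw [hverts]; exact Set.mem_insert _ _
  refine ⟨U, ?_, hverts⟩
  rw [Subgraph.connected_iff', connected_iff_exists_forall_reachable]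
  refine ⟨⟨v, hvmem⟩, ?_⟩
  rintro ⟨w, hw⟩
  rcases hw with hw | hw
  · -- w ∈ singleton verts
    have : w = v := by simpa [singletonSubgraph_verts] using hw
    subst this
    rfl
  · rw [Subgraph.verts_iSup] at hw
    obtain ⟨i, hi⟩ := Set.mem_iUnion.mp hw
    have hconn := (pth v i.1.1).toSubgraph_connected
    have hvi : v ∈ (pth v i.1.1).toSubgraph.verts := (pth v i.1.1).end_mem_verts_toSubgraph
    have hri := hconn ⟨w, hi⟩ ⟨v, hvi⟩
    exact (Reachable.map (Subgraph.inclusion (hle i)) hri).symm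

variable {V : Type*} (T : SimpleGraph V)

variable [Fintype V]

noncomputable def fmax (v : V) : ℕ :=
  Finset.univ.sup (fun c : (Gm T v).ConnectedComponent => (Svc T v c).ncard)

lemma ncard_ne_nb (nb : V) : ({w : V | w ≠ nb} : Set V).ncard = Fintype.card V - 1 := by
  have : ({w : V | w ≠ nb} : Set V) = Set.univ \ {nb} := by ext w; simp
  rw [this, Set.ncard_diff_singleton_of_mem (Set.mem_univ _), Set.ncard_univ, Nat.card_eq_fintype_card]

lemma exists_centroid (hT : T.IsTree) (h3 : 3 ≤ Fintype.card V) :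
    ∃ v : V, ∀ c : (Gm T v).ConnectedComponent, 2 * (Svc T v c).ncard ≤ Fintype.card V := by
  classical
  have hne : Nonempty V := Fintype.card_pos_iff.mp (by omega)
  obtain ⟨v, -, hmin⟩ := Finset.exists_min_image Finset.univ (fmax T)
    ⟨hne.some, Finset.mem_univ _⟩
  refine ⟨v, ?_⟩
  by_contra hcon
  push_neg at hcon
  obtain ⟨c, hc⟩ := hcon
  obtain ⟨s, hs⟩ : ∃ s, s = (Svc T v c).ncard := ⟨_, rfl⟩
  obtain ⟨m, hmdef⟩ : ∃ m, m = Fintype.card V := ⟨_, rfl⟩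
  rw [← hs, ← hmdef] at hc
  rw [← hmdef] at h3
  obtain ⟨x, hx⟩ := c.exists_rep
  obtain ⟨nb, hnb, hadj, hnbc⟩ := exists_adj_comp T hT x.2
  have hnbc' : (Gm T v).connectedComponentMk ⟨nb, hnb⟩ = c := by
    rw [hnbc]; exact hx
  have hnbSvc : nb ∈ Svc T v c := mem_Svc.mpr ⟨hnb, hnbc'⟩
  have hvnb : v ≠ nb := hadj.ne
  have hs1 : 1 ≤ s := hs ▸ one_le_Svc_ncard T c
  have hdiffcard : (Svc T v c \ {nb}).ncard = s - 1 :=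
    by rw [Set.ncard_diff_singleton_of_mem hnbSvc, ← hs]
  have key : ∀ c' : (Gm T nb).ConnectedComponent, (Svc T nb c').ncard < s := by
    intro c'
    by_cases hcv : c' = (Gm T nb).connectedComponentMk ⟨v, hvnb⟩
    · -- the component of v in T - nb : disjoint from Svc T v c \ {nb}
      have hdisj : Disjoint (Svc T nb c') (Svc T v c \ {nb}) := by
        rw [Set.disjoint_left]
        rintro y hy1 ⟨hy2, hynbset⟩
        have hynb : y ≠ nb := Set.mem_singleton_iff.not.mp hynbset
        obtain ⟨hynb2, hyc'⟩ := mem_Svc.mp hy1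
        obtain ⟨hyv, hyc⟩ := mem_Svc.mp hy2
        apply not_reachable_sep T hT hnb hadj hyv hynb2 (hyc.trans hnbc'.symm)
        exact (ConnectedComponent.eq.mp (hyc'.trans hcv)).symm
      have hunion : (Svc T nb c').ncard + (Svc T v c \ {nb}).ncard ≤ m - 1 := by
        rw [← Set.ncard_union_eq hdisj (Set.toFinite _) (Set.toFinite _)]
        have hsub : Svc T nb c' ∪ (Svc T v c \ {nb}) ⊆ {w : V | w ≠ nb} := by
          rintro y (hy | ⟨-, hy⟩)
          · exact (mem_Svc.mp hy).1
          · exact Set.mem_singleton_iff.not.mp hy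
        calc (Svc T nb c' ∪ (Svc T v c \ {nb})).ncard
            ≤ ({w : V | w ≠ nb} : Set V).ncard := Set.ncard_le_ncard hsub (Set.toFinite _)
          _ = m - 1 := by rw [ncard_ne_nb nb, hmdef]
      omega
    · have hsub : Svc T nb c' ⊆ Svc T v c \ {nb} := by
        rintro y hy
        obtain ⟨hynb, hyc'⟩ := mem_Svc.mp hy
        have hyv : y ≠ v := by rintro rfl; exact hcv hyc'.symm
        refine ⟨mem_Svc.mpr ⟨hyv, ?_⟩, hynb⟩
        by_contra hcompne
        obtain ⟨p⟩ := hT.isConnected.preconnected y v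
        have hsupp : ∀ w ∈ (p.toPath : T.Walk y v).support, w ∈ {w : V | w ≠ nb} := by
          intro w hwsupp
          simp only [Set.mem_setOf_eq]
          rintro rfl
          obtain ⟨hw2, hy2, hcompeq⟩ := support_comp T _ p.toPath.2 w hwsupp hnb
          exact hcompne (hcompeq.symm.trans hnbc')
        have hreach := reachable_induce T (p.toPath : T.Walk y v) hsupp
          (hsupp _ (Walk.start_mem_support _)) (hsupp _ (Walk.end_mem_support _))
        exact hcv ((hyc'.symm).trans (ConnectedComponent.sound hreach))
      calc (Svc T nb c').ncard ≤ (Svc T v c \ {nb}).ncard :=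
            Set.ncard_le_ncard hsub (Set.toFinite _)
        _ < s := by omega
  have hfnb : fmax T nb < fmax T v := by
    have hfv : s ≤ fmax T v := by
      rw [hs, fmax]
      exact Finset.le_sup (f := fun c => (Svc T v c).ncard) (Finset.mem_univ c)
    have hlt : fmax T nb < s := by
      rw [fmax, Finset.sup_lt_iff (show (⊥ : ℕ) < s by simp; omega)]
      exact fun c' _ => key c'
    omega
  exact absurd (hmin nb (Finset.mem_univ nb)) (by omega)


variable {V : Type*} (T : SimpleGraph V)

lemma Svc_disjoint {v : V} {c c' : (Gm T v).ConnectedComponent} (h : c ≠ c') :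
    Disjoint (Svc T v c) (Svc T v c') := by
  rw [Set.disjoint_left]
  rintro y hy hy'
  obtain ⟨h1, h2⟩ := mem_Svc.mp hy
  obtain ⟨h1', h2'⟩ := mem_Svc.mp hy'
  exact h (h2.symm.trans h2')

lemma not_mem_Svc_self {v : V} {A : Set ((Gm T v).ConnectedComponent)} :
    v ∉ ⋃ c ∈ A, Svc T v c := by
  intro hv
  obtain ⟨c, -, hc⟩ := Set.mem_iUnion₂.mp hv
  exact (mem_Svc.mp hc).1 rfl

lemma ncard_biUnion_Svc [Fintype V] (v : V) (u : Finset ((Gm T v).ConnectedComponent)) :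
    (⋃ c ∈ (u : Set _), Svc T v c).ncard = ∑ c ∈ u, (Svc T v c).ncard := by
  classical
  induction u using Finset.induction_on with
  | empty => simp
  | @insert c u hcu ih =>
    rw [Finset.coe_insert, Set.biUnion_insert, Finset.sum_insert hcu, ← ih]
    apply Set.ncard_union_eq ?_ (Set.toFinite _) (Set.toFinite _)
    refine Set.disjoint_iUnion₂_right.mpr fun c' hc' => Svc_disjoint T ?_
    rintro rfl
    exact hcu hc'

end TreeSplitAux

/-- Every tree on `m ≥ 3` vertices splits into two subtrees covering all vertices,
sharing exactly one vertex, each with at least `m/3` vertices. -/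
theorem tree_split_into_two_subtrees {V : Type*} [Fintype V] (T : SimpleGraph V)
    (hT : T.IsTree) (m : ℕ) (hm : m = Fintype.card V) (h3 : 3 ≤ m) :
    ∃ U₁ U₂ : T.Subgraph, U₁.Connected ∧ U₂.Connected ∧
      U₁.verts ∪ U₂.verts = Set.univ ∧ (U₁.verts ∩ U₂.verts).ncard = 1 ∧
      m ≤ 3 * U₁.verts.ncard ∧ m ≤ 3 * U₂.verts.ncard := by
  classical
  subst hm
  obtain ⟨v, hcent⟩ := TreeSplitAux.exists_centroid T hT h3
  obtain ⟨t, hts, hA, hB⟩ := greedy_split (Finset.univ : Finset ((TreeSplitAux.Gm T v).ConnectedComponent))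
    (fun c => (TreeSplitAux.Svc T v c).ncard) (Fintype.card V) h3
    (fun c _ => TreeSplitAux.one_le_Svc_ncard T c)
    (fun c _ => by
      show 3 * (TreeSplitAux.Svc T v c).ncard ≤ 2 * Fintype.card V
      have := hcent c; omega)
    (TreeSplitAux.sum_Svc_ncard T v)
  obtain ⟨U₁, hU₁c, hU₁v⟩ := TreeSplitAux.exists_connected_subgraph T hT v (↑t)
  obtain ⟨U₂, hU₂c, hU₂v⟩ := TreeSplitAux.exists_connected_subgraph T hT v (↑(Finset.univ \ t))
  have hXv : v ∉ ⋃ c ∈ (t : Set _), TreeSplitAux.Svc T v c := TreeSplitAux.not_mem_Svc_self T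
  have hYv : v ∉ ⋃ c ∈ ((Finset.univ \ t : Finset _) : Set _), TreeSplitAux.Svc T v c := TreeSplitAux.not_mem_Svc_self T
  refine ⟨U₁, U₂, hU₁c, hU₂c, ?_, ?_, ?_, ?_⟩
  · rw [hU₁v, hU₂v]
    apply Set.eq_univ_of_forall
    intro x
    by_cases hxv : x = v
    · exact Or.inl (Set.mem_insert_iff.mpr (Or.inl hxv))
    · set c := (TreeSplitAux.Gm T v).connectedComponentMk ⟨x, hxv⟩ with hc
      have hxc : x ∈ TreeSplitAux.Svc T v c := TreeSplitAux.mem_Svc.mpr ⟨hxv, rfl⟩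
      by_cases hct : c ∈ t
      · exact Or.inl (Set.mem_insert_of_mem _ (Set.mem_biUnion hct hxc))
      · refine Or.inr (Set.mem_insert_of_mem _ (Set.mem_biUnion ?_ hxc))
        simp [hct]
  · have : U₁.verts ∩ U₂.verts = {v} := by
      rw [hU₁v, hU₂v]
      apply Set.Subset.antisymm
      · rintro x ⟨hx1, hx2⟩
        rcases Set.mem_insert_iff.mp hx1 with rfl | hx1
        · exact rfl
        rcases Set.mem_insert_iff.mp hx2 with rfl | hx2
        · exact rfl
        obtain ⟨c, hct, hxc⟩ := Set.mem_iUnion₂.mp hx1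
        obtain ⟨c', hct', hxc'⟩ := Set.mem_iUnion₂.mp hx2
        obtain ⟨h1, h2⟩ := TreeSplitAux.mem_Svc.mp hxc
        obtain ⟨h1', h2'⟩ := TreeSplitAux.mem_Svc.mp hxc'
        have : c = c' := h2.symm.trans h2'
        subst this
        rw [Finset.mem_coe, Finset.mem_sdiff] at hct'
        exact absurd (Finset.mem_coe.mp hct) hct'.2
      · rintro x rfl
        exact ⟨Set.mem_insert _ _, Set.mem_insert _ _⟩
    rw [this, Set.ncard_singleton]
  · rw [hU₁v, Set.ncard_insert_of_notMem hXv (Set.toFinite _), TreeSplitAux.ncard_biUnion_Svc T v t]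
    omega
  · rw [hU₂v, Set.ncard_insert_of_notMem hYv (Set.toFinite _),
      TreeSplitAux.ncard_biUnion_Svc T v (Finset.univ \ t)]
    omega
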